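/- For self-adjoint n×n complex matrices A and B, the following are equivalent: (1) there is a unitary U such that U A U* ≤ B and U A U* commutes with B; (2) λ_i(A) ≤ λ_i(B) for every i = 1, …, n, where λ_i denotes the i-th largest eigenvalue counted with multiplicity. -/

import Mathlib

open scoped ComplexOrder

open Matrix Module.End

/-- The eigenvalues of a (Hermitian) matrix arranged in non-increasing order, counted
with multiplicity; junk value `0` for non-Hermitian matrices. -/
noncomputable def eigDesc {n : ℕ} (A : Matrix (Fin n) (Fin n) ℂ) (i : Fin n) : ℝ :=
  if h : A.IsHermitian then (h.eigenvalues ∘ Tuple.sort h.eigenvalues) i.rev else 0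

private lemma sorted_le_sorted {n : ℕ} {f g : Fin n → ℝ} (h : ∀ i, f i ≤ g i) (i : Fin n) :
    (f ∘ Tuple.sort f) i ≤ (g ∘ Tuple.sort g) i := by
  classical
  set σ := Tuple.sort f
  set τ := Tuple.sort g
  have hS : (((Finset.Ici i).image σ) ∩ ((Finset.Iic i).image τ)).Nonempty := by
    by_contra hcon
    rw [Finset.not_nonempty_iff_eq_empty] at hcon
    have hcard : (((Finset.Ici i).image σ) ∪ ((Finset.Iic i).image τ)).card
        = (n - i) + (i + 1) := by
      rw [Finset.card_union_of_disjoint (Finset.disjoint_iff_inter_eq_empty.2 hcon),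
        Finset.card_image_of_injective _ σ.injective,
        Finset.card_image_of_injective _ τ.injective, Fin.card_Ici, Fin.card_Iic]
    have hle := Finset.card_le_univ (((Finset.Ici i).image σ) ∪ ((Finset.Iic i).image τ))
    rw [hcard] at hle
    have hi := i.isLt
    simp only [Finset.card_univ, Fintype.card_fin] at hle
    omega
  obtain ⟨j, hj⟩ := hS
  rw [Finset.mem_inter, Finset.mem_image, Finset.mem_image] at hj
  obtain ⟨⟨a, ha, rfl⟩, ⟨b, hb, hba⟩⟩ := hj
  calc (f ∘ σ) i ≤ (f ∘ σ) a := Tuple.monotone_sort f (Finset.mem_Ici.mp ha)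
    _ ≤ g (σ a) := h _
    _ = (g ∘ τ) b := by rw [← hba]; rfl
    _ ≤ (g ∘ τ) i := Tuple.monotone_sort g (Finset.mem_Iic.mp hb)

private lemma det_unitary_conj {n : ℕ} {V : Matrix (Fin n) (Fin n) ℂ}
    (hV : V ∈ Matrix.unitaryGroup (Fin n) ℂ) (X : Matrix (Fin n) (Fin n) ℂ) :
    (V * X * star V).det = X.det := by
  have h1 : V.det * (star V).det = 1 := by
    rw [← Matrix.det_mul, Matrix.mem_unitaryGroup_iff.mp hV, Matrix.det_one]
  calc (V * X * star V).det = X.det * (V.det * (star V).det) := by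
        rw [Matrix.det_mul, Matrix.det_mul]; ring
    _ = X.det := by rw [h1, mul_one]

private lemma sorted_eigen_eq {n : ℕ} {V M : Matrix (Fin n) (Fin n) ℂ}
    (hV : V ∈ Matrix.unitaryGroup (Fin n) ℂ) (c : Fin n → ℝ)
    (hMeq : M = V * Matrix.diagonal (Complex.ofReal ∘ c) * star V)
    (hM : M.IsHermitian) :
    hM.eigenvalues ∘ Tuple.sort hM.eigenvalues = c ∘ Tuple.sort c := by
  classical
  set e := hM.eigenvalues with he
  have hdetdiag : ∀ (d : Fin n → ℝ) (z : ℂ),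
      (z • (1 : Matrix (Fin n) (Fin n) ℂ) - Matrix.diagonal (Complex.ofReal ∘ d)).det
        = ∏ i, (z - (d i : ℂ)) := by
    intro d z
    have hd : z • (1 : Matrix (Fin n) (Fin n) ℂ) - Matrix.diagonal (Complex.ofReal ∘ d)
        = Matrix.diagonal (fun i => z - (d i : ℂ)) := by
      ext i j
      by_cases h : i = j <;>
        simp [Matrix.diagonal_apply, Matrix.one_apply, h]
    rw [hd, Matrix.det_diagonal]
  have hconj : ∀ (W : Matrix (Fin n) (Fin n) ℂ), W ∈ Matrix.unitaryGroup (Fin n) ℂ →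
      ∀ (d : Fin n → ℝ) (z : ℂ),
      z • (1 : Matrix (Fin n) (Fin n) ℂ) - W * Matrix.diagonal (Complex.ofReal ∘ d) * star W
        = W * (z • (1 : Matrix (Fin n) (Fin n) ℂ)
            - Matrix.diagonal (Complex.ofReal ∘ d)) * star W := by
    intro W hW d z
    rw [Matrix.mul_sub, Matrix.sub_mul]
    congr 1
    rw [Matrix.mul_smul, Matrix.smul_mul, mul_one, Matrix.mem_unitaryGroup_iff.mp hW]
  have hpoly : ∀ z : ℂ, ∏ i, (z - (c i : ℂ)) = ∏ i, (z - (e i : ℂ)) := by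
    intro z
    have h1 : (z • (1 : Matrix (Fin n) (Fin n) ℂ) - M).det = ∏ i, (z - (c i : ℂ)) := by
      rw [hMeq, hconj V hV c z, det_unitary_conj hV, hdetdiag]
    have h2 : (z • (1 : Matrix (Fin n) (Fin n) ℂ) - M).det = ∏ i, (z - (e i : ℂ)) := by
      have hsp : M = (hM.eigenvectorUnitary : Matrix (Fin n) (Fin n) ℂ) *
          Matrix.diagonal (Complex.ofReal ∘ e)
            * star (hM.eigenvectorUnitary : Matrix (Fin n) (Fin n) ℂ) :=
        hM.spectral_theorem
      rw [hsp, hconj _ (hM.eigenvectorUnitary).2 e z, det_unitary_conj (hM.eigenvectorUnitary).2,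
        hdetdiag]
    rw [← h1, h2]
  have hP : (∏ i, (Polynomial.X - Polynomial.C ((c i : ℂ)))) =
      (∏ i, (Polynomial.X - Polynomial.C ((e i : ℂ)))) := by
    apply Polynomial.funext
    intro z
    simpa [Polynomial.eval_prod] using hpoly z
  have hroots : Multiset.map (fun i => (c i : ℂ)) Finset.univ.val
      = Multiset.map (fun i => (e i : ℂ)) Finset.univ.val := by
    have key : ∀ d : Fin n → ℝ,
        (∏ i, (Polynomial.X - Polynomial.C ((d i : ℂ)))).roots
          = Multiset.map (fun i => (d i : ℂ)) Finset.univ.val := by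
      intro d
      rw [Finset.prod_eq_multiset_prod]
      rw [show Multiset.map (fun i => Polynomial.X - Polynomial.C ((d i : ℂ))) Finset.univ.val
          = Multiset.map (fun a => Polynomial.X - Polynomial.C a)
            (Multiset.map (fun i => (d i : ℂ)) Finset.univ.val) by rw [Multiset.map_map]; rfl]
      exact Polynomial.roots_multiset_prod_X_sub_C _
    rw [← key c, ← key e, hP]
  have hmul : Multiset.map c Finset.univ.val = Multiset.map e Finset.univ.val := by
    apply Multiset.map_injective Complex.ofReal_injective
    simpa [Multiset.map_map, Function.comp_def] using hroots
  have hperm : (List.ofFn c).Perm (List.ofFn e) := by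
    rw [← Multiset.coe_eq_coe]
    have huniv : ∀ d : Fin n → ℝ, (↑(List.ofFn d) : Multiset ℝ)
        = Multiset.map d Finset.univ.val := by
      intro d
      rw [List.ofFn_eq_map]
      rfl
    rw [huniv, huniv, hmul]
  have hlist : List.ofFn (e ∘ Tuple.sort e) = List.ofFn (c ∘ Tuple.sort c) :=
    List.Perm.eq_of_sortedLE
      (List.sortedLE_ofFn_iff.2 (Tuple.monotone_sort e))
      (List.sortedLE_ofFn_iff.2 (Tuple.monotone_sort c))
      (((Equiv.Perm.ofFn_comp_perm (Tuple.sort e) e)).trans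
        (hperm.symm.trans (Equiv.Perm.ofFn_comp_perm (Tuple.sort c) c).symm))
  exact List.ofFn_injective hlist

private lemma isHermitian_conj_diag {n : ℕ} {V : Matrix (Fin n) (Fin n) ℂ}
    (c : Fin n → ℝ) :
    (V * Matrix.diagonal (Complex.ofReal ∘ c) * star V).IsHermitian := by
  rw [Matrix.star_eq_conjTranspose]
  exact Matrix.isHermitian_mul_mul_conjTranspose V
    (Matrix.isHermitian_diagonal_of_self_adjoint _
      (by ext i; simp [Function.comp, Complex.conj_ofReal]))

private lemma eigDesc_eq_of_conj {n : ℕ} {V M : Matrix (Fin n) (Fin n) ℂ}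
    (hV : V ∈ Matrix.unitaryGroup (Fin n) ℂ) (c : Fin n → ℝ)
    (hMeq : M = V * Matrix.diagonal (Complex.ofReal ∘ c) * star V) (i : Fin n) :
    eigDesc M i = (c ∘ Tuple.sort c) i.rev := by
  have hM : M.IsHermitian := hMeq ▸ isHermitian_conj_diag c
  rw [eigDesc, dif_pos hM, sorted_eigen_eq hV c hMeq hM]

private lemma matrix_eq_of_eigenbasis {n : ℕ} (M : Matrix (Fin n) (Fin n) ℂ)
    (v : OrthonormalBasis (Fin n) ℂ (EuclideanSpace ℂ (Fin n))) (d : Fin n → ℝ)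
    (hMv : ∀ j, M *ᵥ ⇑(v j) = ((d j : ℂ)) • ⇑(v j)) :
    (Matrix.of fun i j => v j i) ∈ Matrix.unitaryGroup (Fin n) ℂ ∧
    M = (Matrix.of fun i j => v j i) * Matrix.diagonal (Complex.ofReal ∘ d)
        * star (Matrix.of fun i j => v j i) := by
  set W : Matrix (Fin n) (Fin n) ℂ := Matrix.of fun i j => v j i with hWdef
  have hW : W ∈ Matrix.unitaryGroup (Fin n) ℂ := by
    rw [Matrix.mem_unitaryGroup_iff']
    ext j k
    have hinner := orthonormal_iff_ite.mp v.orthonormal j k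
    rw [PiLp.inner_apply] at hinner
    simp only [RCLike.inner_apply] at hinner
    simp only [Matrix.mul_apply, Matrix.star_apply, Matrix.one_apply, hWdef, Matrix.of_apply]
    simpa [mul_comm] using hinner
  have hMW : M * W = W * Matrix.diagonal (Complex.ofReal ∘ d) := by
    ext i j
    have h0 := congrFun (hMv j) i
    simp only [Matrix.mulVec, dotProduct, PiLp.smul_apply, smul_eq_mul] at h0
    rw [Matrix.mul_diagonal, Matrix.mul_apply]
    show ∑ x, M i x * (v j) x = (v j) i * (Complex.ofReal ∘ d) j
    simp only [Function.comp_apply]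
    rw [mul_comm]
    exact h0
  refine ⟨hW, ?_⟩
  calc M = M * (W * star W) := by rw [Matrix.mem_unitaryGroup_iff.mp hW, mul_one]
    _ = (M * W) * star W := by rw [mul_assoc]
    _ = W * Matrix.diagonal (Complex.ofReal ∘ d) * star W := by rw [hMW]

set_option maxHeartbeats 1000000 in
private lemma exists_joint_diag {n : ℕ} {C B : Matrix (Fin n) (Fin n) ℂ}
    (hC : C.IsHermitian) (hB : B.IsHermitian) (hCB : Commute C B) :
    ∃ W ∈ Matrix.unitaryGroup (Fin n) ℂ, ∃ c b : Fin n → ℝ,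
      C = W * Matrix.diagonal (Complex.ofReal ∘ c) * star W ∧
      B = W * Matrix.diagonal (Complex.ofReal ∘ b) * star W := by
  classical
  set T : EuclideanSpace ℂ (Fin n) →ₗ[ℂ] EuclideanSpace ℂ (Fin n) := Matrix.toEuclideanLin C
    with hTdef
  set S : EuclideanSpace ℂ (Fin n) →ₗ[ℂ] EuclideanSpace ℂ (Fin n) := Matrix.toEuclideanLin B
    with hSdef
  have hT : T.IsSymmetric := Matrix.isHermitian_iff_isSymmetric.mp hC
  have hS : S.IsSymmetric := Matrix.isHermitian_iff_isSymmetric.mp hB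
  have hTS : Commute T S := by
    show T * S = S * T
    apply LinearMap.ext
    intro x
    simp only [hTdef, hSdef, Module.End.mul_apply, Matrix.toEuclideanLin_apply,
      Equiv.apply_symm_apply, Matrix.mulVec_mulVec]
    rw [hCB.eq]
  set P : ℂ × ℂ → Submodule ℂ (EuclideanSpace ℂ (Fin n)) :=
    fun p => eigenspace T p.2 ⊓ eigenspace S p.1 with hPdef
  have hInternal : DirectSum.IsInternal P := hT.directSum_isInternal_of_commute hS hTS
  have hne : DirectSum.IsInternal (fun p : {p : ℂ × ℂ // P p ≠ ⊥} => P p.val) :=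
    DirectSum.isInternal_ne_bot_iff.mpr hInternal
  have hfin : Set.Finite {p : ℂ × ℂ | P p ≠ ⊥} := by
    apply Set.Finite.subset ((Module.End.finite_hasEigenvalue S).prod
      (Module.End.finite_hasEigenvalue T))
    intro p hp
    rw [Set.mem_setOf_eq] at hp
    have h1 : eigenspace T p.2 ≠ ⊥ := fun h => hp (by simp [hPdef, h])
    have h2 : eigenspace S p.1 ≠ ⊥ := fun h => hp (by simp [hPdef, h])
    exact ⟨h2, h1⟩
  haveI : Fintype {p : ℂ × ℂ // P p ≠ ⊥} := hfin.fintype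
  have hORT0 := hT.orthogonalFamily_eigenspace_inf_eigenspace hS
  have hORT := hORT0.comp (Subtype.coe_injective (p := fun p : ℂ × ℂ => P p ≠ ⊥))
  have hn : Module.finrank ℂ (EuclideanSpace ℂ (Fin n)) = n := by
    simp [finrank_euclideanSpace]
  set v : OrthonormalBasis (Fin n) ℂ (EuclideanSpace ℂ (Fin n)) :=
    hne.subordinateOrthonormalBasis hn hORT with hvdef
  have hvec : ∀ j : Fin n, ∃ cj bj : ℝ,
      C *ᵥ ⇑(v j) = ((cj : ℂ)) • ⇑(v j) ∧ B *ᵥ ⇑(v j) = ((bj : ℂ)) • ⇑(v j) := by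
    intro j
    have hsub := hne.subordinateOrthonormalBasis_subordinate hn j hORT
    set p := (hne.subordinateOrthonormalBasisIndex hn j hORT) with hpdef
    obtain ⟨hmem1, hmem2⟩ : v j ∈ eigenspace T (p.val).2 ⊓ eigenspace S (p.val).1 := hsub
    have hvne : v j ≠ 0 := v.orthonormal.ne_zero j
    have hTv : T (v j) = (p.val).2 • v j := mem_eigenspace_iff.mp hmem1
    have hSv : S (v j) = (p.val).1 • v j := mem_eigenspace_iff.mp hmem2
    have hαr : ((p.val).2.re : ℂ) = (p.val).2 :=
      Complex.conj_eq_iff_re.mp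
        (hT.conj_eigenvalue_eq_self (hasEigenvalue_of_hasEigenvector ⟨hmem1, hvne⟩))
    have hβr : ((p.val).1.re : ℂ) = (p.val).1 :=
      Complex.conj_eq_iff_re.mp
        (hS.conj_eigenvalue_eq_self (hasEigenvalue_of_hasEigenvector ⟨hmem2, hvne⟩))
    refine ⟨(p.val).2.re, (p.val).1.re, ?_, ?_⟩
    · have h1 := congrArg (WithLp.equiv 2 (Fin n → ℂ)) hTv
      simp only [hTdef, Matrix.toEuclideanLin_apply, Equiv.apply_symm_apply] at h1
      change C *ᵥ (v j).ofLp = ((p.val).2 • v j).ofLp at h1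
      rw [h1, hαr]
      rfl
    · have h1 := congrArg (WithLp.equiv 2 (Fin n → ℂ)) hSv
      simp only [hSdef, Matrix.toEuclideanLin_apply, Equiv.apply_symm_apply] at h1
      change B *ᵥ (v j).ofLp = ((p.val).1 • v j).ofLp at h1
      rw [h1, hβr]
      rfl
  choose c b hc hb using hvec
  obtain ⟨hW, hCeq⟩ := matrix_eq_of_eigenbasis C v c hc
  obtain ⟨_, hBeq⟩ := matrix_eq_of_eigenbasis B v b hb
  exact ⟨_, hW, c, b, hCeq, hBeq⟩

private lemma conj_reassoc {n : ℕ} {V W D : Matrix (Fin n) (Fin n) ℂ}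
    (h : star V * V = 1) :
    (W * star V) * (V * D * star V) * star (W * star V) = W * D * star W := by
  rw [Matrix.star_mul, star_star]
  have h2 : (W * star V) * (V * D * star V) * (V * star W)
      = W * ((star V * V) * (D * ((star V * V) * star W))) := by
    noncomm_ring
  rw [h2, h, one_mul, one_mul, ← Matrix.mul_assoc]

private lemma conj_mul_conj {n : ℕ} {V D E : Matrix (Fin n) (Fin n) ℂ}
    (h : star V * V = 1) :
    (V * D * star V) * (V * E * star V) = V * (D * E) * star V := by
  have h2 : (V * D * star V) * (V * E * star V)
      = V * (D * ((star V * V) * E)) * star V := by noncomm_ring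
  rw [h2, h, one_mul, ← Matrix.mul_assoc]

private lemma submatrix_unitary_conj {n : ℕ} {V : Matrix (Fin n) (Fin n) ℂ}
    (hV : V ∈ Matrix.unitaryGroup (Fin n) ℂ) (d : Fin n → ℝ) (e : Equiv.Perm (Fin n)) :
    (V.submatrix id ⇑e) ∈ Matrix.unitaryGroup (Fin n) ℂ ∧
    V * Matrix.diagonal (Complex.ofReal ∘ d) * star V
      = (V.submatrix id ⇑e) * Matrix.diagonal (Complex.ofReal ∘ (d ∘ ⇑e))
          * star (V.submatrix id ⇑e) := by
  have hstar : star (V.submatrix id ⇑e) = (star V).submatrix ⇑e id := by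
    rw [Matrix.star_eq_conjTranspose, Matrix.star_eq_conjTranspose,
      Matrix.conjTranspose_submatrix]
  constructor
  · rw [Matrix.mem_unitaryGroup_iff, hstar, Matrix.submatrix_mul_equiv,
      Matrix.mem_unitaryGroup_iff.mp hV, Matrix.submatrix_id_id]
  · rw [hstar,
      show Matrix.diagonal (Complex.ofReal ∘ (d ∘ ⇑e))
          = (Matrix.diagonal (Complex.ofReal ∘ d)).submatrix ⇑e ⇑e from
        (Matrix.submatrix_diagonal_equiv (Complex.ofReal ∘ d) e).symm,
      Matrix.submatrix_mul_equiv, Matrix.submatrix_mul_equiv]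
    rfl

private lemma reverse_direction {n : ℕ} {A B VA VB : Matrix (Fin n) (Fin n) ℂ}
    {a b : Fin n → ℝ}
    (hVA : VA ∈ Matrix.unitaryGroup (Fin n) ℂ) (hVB : VB ∈ Matrix.unitaryGroup (Fin n) ℂ)
    (hA' : A = VA * Matrix.diagonal (Complex.ofReal ∘ a) * star VA)
    (hB' : B = VB * Matrix.diagonal (Complex.ofReal ∘ b) * star VB)
    (hab : ∀ i, a i ≤ b i) :
    ∃ U ∈ Matrix.unitaryGroup (Fin n) ℂ,
      (B - U * A * star U).PosSemidef ∧ Commute (U * A * star U) B := by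
  have hVA' : star VA * VA = 1 := Matrix.mem_unitaryGroup_iff'.mp hVA
  have hVB' : star VB * VB = 1 := Matrix.mem_unitaryGroup_iff'.mp hVB
  have hUA : (VB * star VA) * A * star (VB * star VA)
      = VB * Matrix.diagonal (Complex.ofReal ∘ a) * star VB := by
    rw [hA']
    exact conj_reassoc hVA'
  refine ⟨VB * star VA, mul_mem hVB (Unitary.star_mem hVA), ?_, ?_⟩
  · have hdiff : B - (VB * star VA) * A * star (VB * star VA)
        = VB * Matrix.diagonal (fun i => ((b i : ℂ)) - ((a i : ℂ))) * star VB := by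
      rw [hUA, hB', ← Matrix.sub_mul, ← Matrix.mul_sub, Matrix.diagonal_sub]
      rfl
    rw [hdiff]
    have hDpsd : (Matrix.diagonal (fun i => ((b i : ℂ)) - ((a i : ℂ)))).PosSemidef := by
      refine Matrix.posSemidef_diagonal_iff.mpr (fun i => ?_)
      rw [← Complex.ofReal_sub]
      exact Complex.zero_le_real.mpr (by linarith [hab i])
    have h6 := hDpsd.mul_mul_conjTranspose_same VB
    rwa [← Matrix.star_eq_conjTranspose] at h6
  · show (VB * star VA) * A * star (VB * star VA) * B
        = B * ((VB * star VA) * A * star (VB * star VA))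
    rw [hUA, hB', conj_mul_conj hVB', conj_mul_conj hVB']
    rw [Matrix.diagonal_mul_diagonal, Matrix.diagonal_mul_diagonal]
    rw [show (fun i => (Complex.ofReal ∘ a) i * (Complex.ofReal ∘ b) i)
        = (fun i => (Complex.ofReal ∘ b) i * (Complex.ofReal ∘ a) i) from
      funext fun i => mul_comm _ _]

set_option maxHeartbeats 1000000 in
/-- For Hermitian `n × n` matrices `A` and `B`, the following are equivalent:
(1) there is a unitary `U` with `U A U* ≤ B` (Loewner order) and `U A U*` commuting
with `B`; (2) `λ_i(A) ≤ λ_i(B)` for every `i`, where `λ_i` is the `i`-th largest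
eigenvalue with multiplicity. -/
theorem unitary_conj_le_iff_eigenvalues_le {n : ℕ} (A B : Matrix (Fin n) (Fin n) ℂ)
    (hA : A.IsHermitian) (hB : B.IsHermitian) :
    (∃ U ∈ Matrix.unitaryGroup (Fin n) ℂ,
        (B - U * A * star U).PosSemidef ∧ Commute (U * A * star U) B) ↔
      ∀ i, eigDesc A i ≤ eigDesc B i := by
  constructor
  · rintro ⟨U, hU, hPSD, hComm⟩
    have hCm : (U * A * star U).IsHermitian := by
      rw [Matrix.star_eq_conjTranspose]
      exact Matrix.isHermitian_mul_mul_conjTranspose U hA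
    obtain ⟨W, hW, c, b, hCeq, hBeq⟩ := exists_joint_diag hCm hB hComm
    have hUU' : star U * U = 1 := Matrix.mem_unitaryGroup_iff'.mp hU
    have hWW' : star W * W = 1 := Matrix.mem_unitaryGroup_iff'.mp hW
    have hA1 : star U * (U * A * star U) * U = A := by
      have h2 : star U * (U * A * star U) * U = (star U * U) * A * (star U * U) := by
        noncomm_ring
      rw [h2, hUU', one_mul, mul_one]
    have hAeq : A = (star U * W) * Matrix.diagonal (Complex.ofReal ∘ c) * star (star U * W) := by
      rw [Matrix.star_mul, star_star]
      calc A = star U * (U * A * star U) * U := hA1.symm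
        _ = star U * (W * Matrix.diagonal (Complex.ofReal ∘ c) * star W) * U := by rw [hCeq]
        _ = (star U * W) * Matrix.diagonal (Complex.ofReal ∘ c) * (star W * U) := by
            noncomm_ring
    have hdA : ∀ i, eigDesc A i = (c ∘ Tuple.sort c) i.rev :=
      eigDesc_eq_of_conj (mul_mem (Unitary.star_mem hU) hW) c hAeq
    have hdB : ∀ i, eigDesc B i = (b ∘ Tuple.sort b) i.rev := eigDesc_eq_of_conj hW b hBeq
    have hDpsd : (Matrix.diagonal (fun i => ((b i : ℂ)) - ((c i : ℂ)))).PosSemidef := by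
      have h3 := hPSD.conjTranspose_mul_mul_same W
      have h4 : Wᴴ * (B - U * A * star U) * W
          = Matrix.diagonal (fun i => ((b i : ℂ)) - ((c i : ℂ))) := by
        rw [← Matrix.star_eq_conjTranspose, Matrix.mul_sub, Matrix.sub_mul, hBeq, hCeq]
        have h5 : ∀ D : Matrix (Fin n) (Fin n) ℂ, star W * (W * D * star W) * W = D := by
          intro D
          have h6 : star W * (W * D * star W) * W = (star W * W) * D * (star W * W) := by
            noncomm_ring
          rw [h6, hWW', one_mul, mul_one]
        rw [h5, h5, Matrix.diagonal_sub]
        rfl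
      rw [← h4]
      exact h3
    have hbc : ∀ i, c i ≤ b i := by
      intro i
      have h0 := Matrix.posSemidef_diagonal_iff.mp hDpsd i
      rw [← Complex.ofReal_sub] at h0
      have h1 := Complex.zero_le_real.mp h0
      linarith
    intro i
    rw [hdA i, hdB i]
    exact sorted_le_sorted hbc i.rev
  · intro h
    have h' : ∀ j, (hA.eigenvalues ∘ Tuple.sort hA.eigenvalues) j
        ≤ (hB.eigenvalues ∘ Tuple.sort hB.eigenvalues) j := by
      intro j
      have h0 := h j.rev
      rw [eigDesc, dif_pos hA, eigDesc, dif_pos hB, Fin.rev_rev] at h0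
      exact h0
    have hspA : A = (hA.eigenvectorUnitary : Matrix (Fin n) (Fin n) ℂ) *
        Matrix.diagonal (Complex.ofReal ∘ hA.eigenvalues)
          * star (hA.eigenvectorUnitary : Matrix (Fin n) (Fin n) ℂ) := hA.spectral_theorem
    have hspB : B = (hB.eigenvectorUnitary : Matrix (Fin n) (Fin n) ℂ) *
        Matrix.diagonal (Complex.ofReal ∘ hB.eigenvalues)
          * star (hB.eigenvectorUnitary : Matrix (Fin n) (Fin n) ℂ) := hB.spectral_theorem
    obtain ⟨hVA, hAconj⟩ := submatrix_unitary_conj (hA.eigenvectorUnitary).2 hA.eigenvalues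
      (Tuple.sort hA.eigenvalues)
    obtain ⟨hVB, hBconj⟩ := submatrix_unitary_conj (hB.eigenvectorUnitary).2 hB.eigenvalues
      (Tuple.sort hB.eigenvalues)
    exact reverse_direction hVA hVB (hspA.trans hAconj) (hspB.trans hBconj) h'
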